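/- For every integer k ≥ 2 there exists a finite partially ordered set (V, ≤) and a greedy antichain sequence A_1, …, A_k of length k such that |A_1 ∪ … ∪ A_k| ≤ (3/4)·α_k; moreover in the construction α_k = |V|, so the k greedy antichains cover at most 3/4 of the optimal coverage of k antichains. -/

import Mathlib

/-- A greedy antichain sequence: pairwise disjoint antichains `A 0, …, A (m-1)` such that
each `A i` has maximum cardinality among all antichains contained in the complement of
the previously chosen antichains. -/
def GreedyAntichainSeq (V : Type) [DecidableEq V] [PartialOrder V]
    {m : ℕ} (A : Fin m → Finset V) : Prop :=
  (∀ i, IsAntichain (· ≤ ·) ((A i : Finset V) : Set V)) ∧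
  (∀ i j, i ≠ j → Disjoint (A i) (A j)) ∧
  (∀ (i : Fin m) (B : Finset V), IsAntichain (· ≤ ·) ((B : Finset V) : Set V) →
    (∀ v ∈ B, ∀ j, j < i → v ∉ A j) → B.card ≤ (A i).card)

/-- `α_k`: the maximum cardinality of the union of `k` pairwise disjoint antichains. -/
noncomputable def alphaVal (V : Type) [Fintype V] [DecidableEq V] [PartialOrder V]
    (k : ℕ) : ℕ :=
  sSup {n : ℕ | ∃ A : Fin k → Finset V,
    (∀ i, IsAntichain (· ≤ ·) ((A i : Finset V) : Set V)) ∧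
    (∀ i j, i ≠ j → Disjoint (A i) (A j)) ∧
    n = (Finset.univ.biUnion A).card}

def GreedyAntichainsMissQuarter (V : Type) [Fintype V] [DecidableEq V] [PartialOrder V]
    (k : ℕ) : Prop :=
  ∃ A : Fin k → Finset V, GreedyAntichainSeq V A ∧
    4 * (Finset.univ.biUnion A).card ≤ 3 * alphaVal V k ∧
    alphaVal V k = Fintype.card V

namespace GreedyQ

structure Cell (R C : ℕ) where
  r : Fin R
  c : Fin C
deriving DecidableEq, Fintype

variable {R C : ℕ}

def cle (x y : Cell R C) : Prop :=
  (x.r.val = y.r.val ∧ x.c.val = y.c.val) ∨ (x.r.val < y.r.val ∧ y.c.val ≤ x.c.val)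

instance : DecidablePred fun p : Cell R C × Cell R C => cle p.1 p.2 := by
  intro p; unfold cle; infer_instance

lemma cle_trans {x y z : Cell R C} (h1 : cle x y) (h2 : cle y z) : cle x z := by
  unfold cle at *; omega

lemma cle_antisymm {x y : Cell R C} (h1 : cle x y) (h2 : cle y x) : x = y := by
  have hr : x.r.val = y.r.val ∧ x.c.val = y.c.val := by unfold cle at *; omega
  cases x; cases y
  simp only [Cell.mk.injEq]
  exact ⟨Fin.ext hr.1, Fin.ext hr.2⟩

instance : PartialOrder (Cell R C) where
  le := cle
  le_refl x := Or.inl ⟨rfl, rfl⟩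
  le_trans _ _ _ := cle_trans
  le_antisymm _ _ := cle_antisymm

lemma le_iff (x y : Cell R C) : x ≤ y ↔ cle x y := Iff.rfl

lemma cell_eq_iff (x y : Cell R C) : x = y ↔ (x.r.val = y.r.val ∧ x.c.val = y.c.val) := by
  constructor
  · rintro rfl; exact ⟨rfl, rfl⟩
  · rintro ⟨h1, h2⟩; cases x; cases y; simp only [Cell.mk.injEq]
    exact ⟨Fin.ext h1, Fin.ext h2⟩

lemma card_cell : Fintype.card (Cell R C) = R * C := by
  rw [show (R * C) = Fintype.card (Fin R × Fin C) by simp]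
  exact Fintype.card_congr ⟨fun x => (x.r, x.c), fun p => ⟨p.1, p.2⟩, fun x => rfl, fun p => rfl⟩


/-- In an antichain, the column map is injective. -/
lemma anti_col_injOn {B : Finset (Cell R C)}
    (hB : IsAntichain (· ≤ ·) (B : Set (Cell R C))) :
    Set.InjOn (fun x : Cell R C => x.c.val) (B : Set (Cell R C)) := by
  intro x hx y hy hxy
  by_contra hne
  rcases Nat.lt_trichotomy x.r.val y.r.val with h | h | h
  · exact hB hx hy hne (Or.inr ⟨h, le_of_eq hxy.symm⟩)
  · exact hne ((cell_eq_iff x y).2 ⟨h, hxy⟩)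
  · exact hB hy hx (fun e => hne e.symm) (Or.inr ⟨h, le_of_eq hxy⟩)

lemma card_eq_card_image_col {B : Finset (Cell R C)}
    (hB : IsAntichain (· ≤ ·) (B : Set (Cell R C))) :
    B.card = (B.image fun x : Cell R C => x.c.val).card :=
  (Finset.card_image_of_injOn (anti_col_injOn hB)).symm

/-- Any antichain has at most `C` elements. -/
lemma anti_card_le {B : Finset (Cell R C)}
    (hB : IsAntichain (· ≤ ·) (B : Set (Cell R C))) : B.card ≤ C := by
  rw [card_eq_card_image_col hB]
  calc (B.image fun x : Cell R C => x.c.val).card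
      ≤ (Finset.range C).card := by
        apply Finset.card_le_card
        intro n hn
        simp only [Finset.mem_image] at hn
        obtain ⟨x, _, rfl⟩ := hn
        simpa using x.c.isLt
    _ = C := Finset.card_range C

instance (x y : Cell R C) : Decidable (cle x y) := by unfold cle; infer_instance

instance : DecidableRel (fun x y : Cell R C => x ≤ y) := fun x y =>
  decidable_of_iff (cle x y) (le_iff x y).symm

/-- the rows, as an antichain cover. -/
def rowSet (j : Fin R) : Finset (Cell R C) :=
  Finset.univ.filter (fun x => x.r = j)

lemma anti_rowSet (j : Fin R) :
    IsAntichain (· ≤ ·) ((rowSet (C := C) j : Finset (Cell R C)) : Set (Cell R C)) := by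
  intro x hx y hy hne hle
  simp only [Finset.coe_filter, rowSet, Set.mem_setOf_eq, Finset.mem_univ, true_and] at hx hy
  rw [le_iff] at hle
  rw [ne_eq, cell_eq_iff] at hne
  unfold cle at hle
  have : x.r.val = y.r.val := by rw [hx, hy]
  omega

lemma disj_rowSet (i j : Fin R) (hne : i ≠ j) :
    Disjoint (rowSet (C := C) i) (rowSet (C := C) j) := by
  rw [Finset.disjoint_left]
  intro x hx hx'
  simp only [rowSet, Finset.mem_filter] at hx hx'
  exact hne (hx.2 ▸ hx'.2)

lemma biUnion_rowSet : Finset.univ.biUnion (rowSet (R := R) (C := C)) = Finset.univ := by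
  apply Finset.eq_univ_of_forall
  intro x
  rw [Finset.mem_biUnion]
  exact ⟨x.r, Finset.mem_univ _, by simp [rowSet]⟩

lemma alpha_eq : alphaVal (Cell R C) R = R * C := by
  have hmem : R * C ∈ {n : ℕ | ∃ A : Fin R → Finset (Cell R C),
      (∀ i, IsAntichain (· ≤ ·) ((A i : Finset (Cell R C)) : Set (Cell R C))) ∧
      (∀ i j, i ≠ j → Disjoint (A i) (A j)) ∧
      n = (Finset.univ.biUnion A).card} := by
    refine ⟨rowSet, fun i => anti_rowSet i, fun i j h => disj_rowSet i j h, ?_⟩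
    rw [biUnion_rowSet, Finset.card_univ, card_cell]
  have hub : ∀ n ∈ {n : ℕ | ∃ A : Fin R → Finset (Cell R C),
      (∀ i, IsAntichain (· ≤ ·) ((A i : Finset (Cell R C)) : Set (Cell R C))) ∧
      (∀ i j, i ≠ j → Disjoint (A i) (A j)) ∧
      n = (Finset.univ.biUnion A).card}, n ≤ R * C := by
    rintro n ⟨A, -, -, rfl⟩
    calc (Finset.univ.biUnion A).card ≤ Fintype.card (Cell R C) := Finset.card_le_univ _
      _ = R * C := card_cell
  rw [alphaVal]
  exact le_antisymm (csSup_le ⟨R * C, hmem⟩ hub) (le_csSup ⟨R * C, hub⟩ hmem)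

section Main
variable (k : ℕ) [NeZero k]

def mk (a b : ℕ) : Cell k (k+1) :=
  ⟨⟨a % k, Nat.mod_lt _ (Nat.pos_of_ne_zero (NeZero.ne k))⟩,
   ⟨b % (k+1), Nat.mod_lt _ (Nat.succ_pos k)⟩⟩

lemma mk_r (a b : ℕ) (h : a < k) : (mk k a b).r.val = a := Nat.mod_eq_of_lt h
lemma mk_c (a b : ℕ) (h : b < k+1) : (mk k a b).c.val = b := Nat.mod_eq_of_lt h

lemma mk_eq (x : Cell k (k+1)) (a b : ℕ) (ha : a < k) (hb : b < k+1) :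
    mk k a b = x ↔ (x.r.val = a ∧ x.c.val = b) := by
  rw [cell_eq_iff, mk_r k a b ha, mk_c k a b hb]
  omega

/-- the "bent plus diagonal": `{(j, j+s) : j ≤ k-1-s} ∪ {(k-1-s, k)}`. -/
def diagP (s : ℕ) : Finset (Cell k (k+1)) :=
  ((Finset.range (k-s)).image fun j => mk k j (j+s)) ∪ {mk k (k-1-s) k}

/-- the "minus diagonal": `{(j+s, j) : j ≤ k-1-s}`. -/
def diagM (s : ℕ) : Finset (Cell k (k+1)) :=
  (Finset.range (k-s)).image fun j => mk k (j+s) j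

lemma mem_diagP (s : ℕ) (hs : s < k) (x : Cell k (k+1)) :
    x ∈ diagP k s ↔ (x.c.val = x.r.val + s ∧ x.c.val < k) ∨ (x.r.val = k-1-s ∧ x.c.val = k) := by
  simp only [diagP, Finset.mem_union, Finset.mem_image, Finset.mem_range, Finset.mem_singleton]
  constructor
  · rintro (⟨j, hj, hx⟩ | hx)
    · rw [mk_eq k x j (j+s) (by omega) (by omega)] at hx
      left; omega
    · rw [eq_comm, mk_eq k x (k-1-s) k (by omega) (by omega)] at hx
      right; omega
  · rintro (⟨h1, h2⟩ | ⟨h1, h2⟩)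
    · exact Or.inl ⟨x.r.val, by omega, by rw [mk_eq k x _ _ (by omega) (by omega)]; omega⟩
    · exact Or.inr (((mk_eq k x (k-1-s) k (by omega) (by omega)).2 (by omega)).symm)

lemma mem_diagM (s : ℕ) (hs : 1 ≤ s) (x : Cell k (k+1)) :
    x ∈ diagM k s ↔ x.r.val = x.c.val + s := by
  have hrk := x.r.isLt
  simp only [diagM, Finset.mem_image, Finset.mem_range]
  constructor
  · rintro ⟨j, hj, hx⟩
    rw [mk_eq k x (j+s) j (by omega) (by omega)] at hx
    omega
  · intro h
    exact ⟨x.c.val, by omega, by rw [mk_eq k x _ _ (by omega) (by omega)]; omega⟩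

lemma card_diagP (s : ℕ) (hs : s < k) : (diagP k s).card = k - s + 1 := by
  rw [diagP, Finset.card_union_of_disjoint, Finset.card_image_of_injOn, Finset.card_range,
    Finset.card_singleton]
  · intro a ha b hb hab
    simp only [Finset.coe_range, Set.mem_Iio] at ha hb
    have h := congrArg (fun z : Cell k (k+1) => z.r.val) hab
    simp only at h
    rw [mk_r k a (a+s) (by omega), mk_r k b (b+s) (by omega)] at h
    exact h
  · simp only [Finset.disjoint_singleton_right, Finset.mem_image, Finset.mem_range]
    rintro ⟨j, hj, hx⟩
    have h1 := mk_c k j (j+s) (by omega)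
    have h2 := mk_c k (k-1-s) k (by omega)
    rw [hx] at h1
    omega

lemma card_diagM (s : ℕ) (hs : s ≤ k) : (diagM k s).card = k - s := by
  rw [diagM, Finset.card_image_of_injOn, Finset.card_range]
  intro a ha b hb hab
  simp only [Finset.coe_range, Set.mem_Iio] at ha hb
  have h := congrArg (fun z : Cell k (k+1) => z.r.val) hab
  simp only at h
  rw [mk_r k (a+s) a (by omega), mk_r k (b+s) b (by omega)] at h
  omega

lemma anti_diagP (s : ℕ) (hs : s < k) :
    IsAntichain (· ≤ ·) ((diagP k s : Finset (Cell k (k+1))) : Set (Cell k (k+1))) := by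
  intro x hx y hy hne hle
  simp only [Finset.mem_coe, mem_diagP k s hs] at hx hy
  rw [le_iff] at hle
  rw [ne_eq, cell_eq_iff] at hne
  unfold cle at hle
  omega

lemma anti_diagM (s : ℕ) (hs : 1 ≤ s) :
    IsAntichain (· ≤ ·) ((diagM k s : Finset (Cell k (k+1))) : Set (Cell k (k+1))) := by
  intro x hx y hy hne hle
  simp only [Finset.mem_coe, mem_diagM k s hs] at hx hy
  rw [le_iff] at hle
  rw [ne_eq, cell_eq_iff] at hne
  unfold cle at hle
  omega


/-- the `t`-th greedy antichain. -/
def sched (t : ℕ) : Finset (Cell k (k+1)) :=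
  if t = 0 ∨ t % 2 = 1 then diagP k ((t+1)/2) else diagM k (t/2)

lemma mem_sched_P (t : ℕ) (ht : t < k) (hodd : t = 0 ∨ t % 2 = 1) (x : Cell k (k+1)) :
    x ∈ sched k t ↔
      (x.c.val = x.r.val + (t+1)/2 ∧ x.c.val < k) ∨
      (x.r.val = k-1-((t+1)/2) ∧ x.c.val = k) := by
  have hk : 0 < k := Nat.pos_of_ne_zero (NeZero.ne k)
  rw [sched, if_pos hodd]
  exact mem_diagP k ((t+1)/2) (by omega) x

lemma mem_sched_M (t : ℕ) (ht : t < k) (heven : ¬(t = 0 ∨ t % 2 = 1)) (x : Cell k (k+1)) :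
    x ∈ sched k t ↔ x.r.val = x.c.val + t/2 := by
  rw [sched, if_neg heven]
  exact mem_diagM k (t/2) (by omega) x

lemma card_sched (t : ℕ) (ht : t < k) :
    (sched k t).card = if t = 0 then k + 1 else k - t/2 := by
  have hk : 0 < k := Nat.pos_of_ne_zero (NeZero.ne k)
  by_cases h : t = 0 ∨ t % 2 = 1
  · rw [sched, if_pos h, card_diagP k _ (by omega)]
    rcases h with rfl | h
    · simp
    · rw [if_neg (by omega)]
      omega
  · rw [sched, if_neg h, card_diagM k _ (by omega), if_neg (by omega)]

lemma anti_sched (t : ℕ) (ht : t < k) :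
    IsAntichain (· ≤ ·) ((sched k t : Finset (Cell k (k+1))) : Set (Cell k (k+1))) := by
  have hk : 0 < k := Nat.pos_of_ne_zero (NeZero.ne k)
  by_cases h : t = 0 ∨ t % 2 = 1
  · rw [sched, if_pos h]; exact anti_diagP k _ (by omega)
  · rw [sched, if_neg h]; exact anti_diagM k _ (by omega)

lemma disj_sched (t t' : ℕ) (ht : t < k) (ht' : t' < k) (hne : t ≠ t') :
    Disjoint (sched k t) (sched k t') := by
  have hk : 0 < k := Nat.pos_of_ne_zero (NeZero.ne k)
  rw [Finset.disjoint_left]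
  intro x hx hx'
  by_cases h : t = 0 ∨ t % 2 = 1 <;> by_cases h' : t' = 0 ∨ t' % 2 = 1
  · rw [mem_sched_P k t ht h x] at hx
    rw [mem_sched_P k t' ht' h' x] at hx'
    omega
  · rw [mem_sched_P k t ht h x] at hx
    rw [mem_sched_M k t' ht' h' x] at hx'
    omega
  · rw [mem_sched_M k t ht h x] at hx
    rw [mem_sched_P k t' ht' h' x] at hx'
    omega
  · rw [mem_sched_M k t ht h x] at hx
    rw [mem_sched_M k t' ht' h' x] at hx'
    omega


lemma avoid_band (i : ℕ) (hi1 : 1 ≤ i) (hik : i < k) (v : Cell k (k+1))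
    (hav : ∀ j : ℕ, j < i → v ∉ sched k j) :
    (v.c.val < k →
      (v.r.val + i/2 + 1 ≤ v.c.val ∨ v.c.val + (i-1)/2 + 1 ≤ v.r.val)) ∧
    (v.c.val = k → v.r.val + i/2 + 2 ≤ k) := by
  have hk : 0 < k := Nat.pos_of_ne_zero (NeZero.ne k)
  have hrk := v.r.isLt
  have hck := v.c.isLt
  constructor
  · intro hc
    by_contra hcon
    push_neg at hcon
    obtain ⟨h1, h2⟩ := hcon
    rcases Nat.lt_or_ge v.r.val v.c.val with hrc | hrc
    · -- strictly above the diagonal, offset d = c - r with 1 ≤ d ≤ i/2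
      refine hav (2*(v.c.val - v.r.val) - 1) (by omega) ?_
      rw [mem_sched_P k _ (by omega) (by omega) v]
      left
      exact ⟨by omega, hc⟩
    · rcases Nat.eq_or_lt_of_le hrc with hrc' | hrc'
      · -- on the diagonal
        refine hav 0 (by omega) ?_
        rw [mem_sched_P k 0 (by omega) (by omega) v]
        left
        exact ⟨by omega, hc⟩
      · -- below the diagonal, offset r - c ≤ (i-1)/2
        refine hav (2*(v.r.val - v.c.val)) (by omega) ?_
        rw [mem_sched_M k _ (by omega) (by omega) v]
        omega
  · intro hc
    by_contra hcon
    push_neg at hcon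
    -- v is a bent cell of some earlier step, s = k-1-r ≤ i/2
    by_cases hs : v.r.val = k - 1
    · refine hav 0 (by omega) ?_
      rw [mem_sched_P k 0 (by omega) (by omega) v]
      right
      omega
    · refine hav (2*(k - 1 - v.r.val) - 1) (by omega) ?_
      rw [mem_sched_P k _ (by omega) (by omega) v]
      right
      omega

lemma sq_bound (p q cap : ℕ) (B' : Finset (Cell k (k+1)))
    (hB : IsAntichain (· ≤ ·) (B' : Set (Cell k (k+1))))
    (hcols : ∀ x ∈ B', x.c.val < k)
    (hband : ∀ x ∈ B', x.r.val + q + 1 ≤ x.c.val ∨ x.c.val + p + 1 ≤ x.r.val)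
    (hcap : ∀ x ∈ B', x.r.val ≤ cap) :
    B'.card ≤ max (k - 1 - q) (cap - p) := by
  classical
  set H := B'.filter (fun x => x.c.val + p + 1 ≤ x.r.val) with hH
  rcases Finset.eq_empty_or_nonempty H with hHe | hHne
  · -- no element below the band: all columns in [q+1, k-1]
    have hsub : (B'.image fun x : Cell k (k+1) => x.c.val) ⊆ Finset.Icc (q+1) (k-1) := by
      intro n hn
      simp only [Finset.mem_image] at hn
      obtain ⟨x, hx, rfl⟩ := hn
      have h1 := hcols x hx
      have h2 : ¬ (x.c.val + p + 1 ≤ x.r.val) := by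
        intro hcontra
        have : x ∈ H := by rw [hH, Finset.mem_filter]; exact ⟨hx, hcontra⟩
        simp [hHe] at this
      have h3 := hband x hx
      simp only [Finset.mem_Icc]
      omega
    have := Finset.card_le_card hsub
    rw [← card_eq_card_image_col hB] at this
    rw [Nat.card_Icc] at this
    omega
  · obtain ⟨y0, hy0H, hy0max⟩ := Finset.exists_max_image H (fun x : Cell k (k+1) => x.c.val) hHne
    rw [hH, Finset.mem_filter] at hy0H
    obtain ⟨hy0B, hy0low⟩ := hy0H
    have hy0cap := hcap y0 hy0B
    -- every column is ≤ c0 or ≥ c0 + p + q + 2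
    have hsub : (B'.image fun x : Cell k (k+1) => x.c.val) ⊆
        Finset.Icc 0 y0.c.val ∪ Finset.Icc (y0.c.val + p + q + 2) (k-1) := by
      intro n hn
      simp only [Finset.mem_image] at hn
      obtain ⟨x, hx, rfl⟩ := hn
      simp only [Finset.mem_union, Finset.mem_Icc]
      by_cases hxH : x ∈ H
      · have := hy0max x hxH
        left; omega
      · rcases le_or_gt x.c.val y0.c.val with hle | hgt
        · left; omega
        · -- x is strictly to the right of y0, x is above the band
          have hxL : x.r.val + q + 1 ≤ x.c.val := by
            rcases hband x hx with h | h
            · exact h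
            · exact absurd (by rw [hH, Finset.mem_filter]; exact ⟨hx, h⟩) hxH
          have hne : x ≠ y0 := by
            intro h; rw [h] at hgt; omega
          have hrow : y0.r.val ≤ x.r.val := by
            by_contra hcon
            push_neg at hcon
            exact hB (Finset.mem_coe.2 hx) (Finset.mem_coe.2 hy0B) hne
              (Or.inr ⟨hcon, Nat.le_of_lt hgt⟩)
          have := hcols x hx
          right; omega
    have hcard := Finset.card_le_card hsub
    have hcard2 := Finset.card_union_le (Finset.Icc 0 y0.c.val)
      (Finset.Icc (y0.c.val + p + q + 2) (k-1))
    rw [← card_eq_card_image_col hB] at hcard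
    rw [Nat.card_Icc, Nat.card_Icc] at hcard2
    omega

lemma bound_step (p q : ℕ) (hp : p ≤ q) (hq : q ≤ p + 1) (hqk : 2*q + 1 ≤ k)
    (B : Finset (Cell k (k+1)))
    (hB : IsAntichain (· ≤ ·) (B : Set (Cell k (k+1))))
    (hband : ∀ v ∈ B,
      (v.c.val < k → (v.r.val + q + 1 ≤ v.c.val ∨ v.c.val + p + 1 ≤ v.r.val)) ∧
      (v.c.val = k → v.r.val + q + 2 ≤ k)) :
    B.card ≤ k - q := by
  classical
  set Bk := B.filter (fun x => x.c.val = k) with hBk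
  set Bs := B.filter (fun x => ¬ (x.c.val = k)) with hBs
  have hsplit : Bk.card + Bs.card = B.card := Finset.card_filter_add_card_filter_not _
  have hBssub : Bs ⊆ B := Finset.filter_subset _ _
  have hBsanti : IsAntichain (· ≤ ·) (Bs : Set (Cell k (k+1))) :=
    hB.subset (by exact_mod_cast hBssub)
  have hBscols : ∀ x ∈ Bs, x.c.val < k := by
    intro x hx
    rw [hBs, Finset.mem_filter] at hx
    have := x.c.isLt
    omega
  have hBsband : ∀ x ∈ Bs, x.r.val + q + 1 ≤ x.c.val ∨ x.c.val + p + 1 ≤ x.r.val := by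
    intro x hx
    exact (hband x (hBssub hx)).1 (hBscols x hx)
  have hBk1 : Bk.card ≤ 1 := by
    rw [Finset.card_le_one]
    intro a ha b hb
    rw [hBk, Finset.mem_filter] at ha hb
    exact anti_col_injOn hB (Finset.mem_coe.2 ha.1) (Finset.mem_coe.2 hb.1)
      (show a.c.val = b.c.val by omega)
  rcases Nat.eq_zero_or_pos Bk.card with h0 | h1
  · -- no column-k element
    have := sq_bound k p q (k-1) Bs hBsanti hBscols hBsband
      (fun x _ => by have := x.r.isLt; omega)
    omega
  · -- exactly one column-k element z
    have hBkcard : Bk.card = 1 := le_antisymm hBk1 h1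
    obtain ⟨z, hz⟩ := Finset.card_eq_one.1 hBkcard
    have hzB : z ∈ B ∧ z.c.val = k := by
      have : z ∈ Bk := by rw [hz]; exact Finset.mem_singleton_self z
      rw [hBk, Finset.mem_filter] at this
      exact this
    have hzrow : z.r.val + q + 2 ≤ k := (hband z hzB.1).2 hzB.2
    have hcap : ∀ x ∈ Bs, x.r.val ≤ z.r.val := by
      intro x hx
      by_contra hcon
      push_neg at hcon
      have hxc := hBscols x hx
      have hne : z ≠ x := by
        intro h; rw [h] at hzB; omega
      exact hB (Finset.mem_coe.2 hzB.1) (Finset.mem_coe.2 (hBssub hx)) hne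
        (Or.inr ⟨hcon, by omega⟩)
    have := sq_bound k p q z.r.val Bs hBsanti hBscols hBsband hcap
    omega

lemma max_step (i : ℕ) (hik : i < k) (B : Finset (Cell k (k+1)))
    (hB : IsAntichain (· ≤ ·) (B : Set (Cell k (k+1))))
    (hav : ∀ v ∈ B, ∀ j : ℕ, j < i → v ∉ sched k j) :
    B.card ≤ (sched k i).card := by
  have hk : 0 < k := Nat.pos_of_ne_zero (NeZero.ne k)
  rw [card_sched k i hik]
  by_cases hi : i = 0
  · rw [if_pos hi]
    exact anti_card_le hB
  · rw [if_neg hi]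
    exact bound_step k ((i-1)/2) (i/2) (by omega) (by omega) (by omega) B hB
      (fun v hv => avoid_band k i (by omega) hik v (fun j hj => hav v hv j hj))

lemma sum_aux (m n : ℕ) (h : m ≤ n + 1) :
    (Finset.range m).sum (fun t => n - t/2) + (Finset.range m).sum (fun t => t/2)
      = m * n := by
  induction m with
  | zero => simp
  | succ m ih =>
    rw [Finset.sum_range_succ, Finset.sum_range_succ, Nat.succ_mul]
    have hih := ih (by omega)
    omega

lemma S_lower : ∀ n, 3 ≤ n → n*n + 4 ≤ 4 * (Finset.range n).sum (fun t => t/2) + 3*n := by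
  intro n hn
  induction n, hn using Nat.le_induction with
  | base => decide
  | succ n hn ih =>
    rw [Finset.sum_range_succ]
    have h2 : (n+1)*(n+1) = n*n + 2*n + 1 := by ring
    omega

lemma cov_bound (hk3 : 3 ≤ k) :
    4 * (Finset.univ.biUnion fun t : Fin k => sched k t.val).card ≤ 3 * (k * (k+1)) := by
  rw [Finset.card_biUnion (fun x _ y _ hxy =>
    disj_sched k x.val y.val x.isLt y.isLt (fun h => hxy (Fin.ext h)))]
  have h1 : (∑ t : Fin k, (sched k t.val).card)
      = ∑ t ∈ Finset.range k, (if t = 0 then k + 1 else k - t/2) := by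
    rw [Fin.sum_univ_eq_sum_range (fun t => (sched k t).card) k]
    exact Finset.sum_congr rfl (fun t ht => card_sched k t (Finset.mem_range.1 ht))
  rw [h1]
  have h2 : ∑ t ∈ Finset.range k, (if t = 0 then k + 1 else k - t/2)
      = (∑ t ∈ Finset.range k, (k - t/2)) + 1 := by
    have h3 : ∀ t ∈ Finset.range k, (if t = 0 then k + 1 else k - t/2)
        = (k - t/2) + (if t = 0 then 1 else 0) := by
      intro t _
      by_cases h : t = 0 <;> simp [h]
    rw [Finset.sum_congr rfl h3, Finset.sum_add_distrib, Finset.sum_ite_eq' (Finset.range k) 0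
      (fun _ => 1)]
    simp [hk3]
    omega
  rw [h2]
  have h4 := sum_aux k k (by omega)
  have h5 := S_lower k hk3
  have h6 : k * (k+1) = k*k + k := by ring
  omega

theorem main_ge3 (hk3 : 3 ≤ k) :
    @GreedyAntichainsMissQuarter (Cell k (k+1)) _ _ _ k := by
  refine ⟨fun t : Fin k => sched k t.val, ⟨?_, ?_, ?_⟩, ?_, ?_⟩
  · exact fun i => anti_sched k i.val i.isLt
  · exact fun i j hij => disj_sched k i.val j.val i.isLt j.isLt (fun h => hij (Fin.ext h))
  · intro i B hB hav
    refine max_step k i.val i.isLt B hB ?_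
    intro v hv j hj
    exact hav v hv ⟨j, lt_trans hj i.isLt⟩ (by exact hj)
  · rw [alpha_eq]
    exact cov_bound k hk3
  · rw [alpha_eq, card_cell]

end Main

section TwoCase

def c00 : Cell 2 2 := ⟨0, 0⟩
def c01 : Cell 2 2 := ⟨0, 1⟩
def c10 : Cell 2 2 := ⟨1, 0⟩
def c11 : Cell 2 2 := ⟨1, 1⟩

def Atwo : Fin 2 → Finset (Cell 2 2) := ![{c00, c11}, {c01}]

theorem main_two : @GreedyAntichainsMissQuarter (Cell 2 2) _ _ _ 2 := by
  classical
  refine ⟨Atwo, ⟨?_, ?_, ?_⟩, ?_, ?_⟩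
  · intro i
    fin_cases i
    · intro x hx y hy hne hle
      simp only [Atwo, Fin.zero_eta, Fin.isValue, Matrix.cons_val_zero, Finset.coe_insert,
        Set.mem_insert_iff, Finset.coe_singleton, Set.mem_singleton_iff] at hx hy
      rw [cell_eq_iff, cell_eq_iff] at hx
      rw [cell_eq_iff, cell_eq_iff] at hy
      rw [le_iff] at hle
      unfold cle at hle
      rw [ne_eq, cell_eq_iff] at hne
      have e1 : c00.r.val = 0 := rfl
      have e2 : c00.c.val = 0 := rfl
      have e3 : c11.r.val = 1 := rfl
      have e4 : c11.c.val = 1 := rfl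
      omega
    · intro x hx y hy hne _
      simp only [Atwo, Fin.mk_one, Fin.isValue, Matrix.cons_val_one, Matrix.head_cons,
        Finset.coe_singleton, Set.mem_singleton_iff] at hx hy
      exact hne ((List.mem_singleton.1 hx).trans (List.mem_singleton.1 hy).symm)
  · intro i j hij
    fin_cases i <;> fin_cases j <;> first | exact absurd rfl hij | decide
  · intro i B hB hav
    fin_cases i
    · have h := anti_card_le hB
      have : (Atwo 0).card = 2 := by decide
      simp only [Fin.zero_eta] at *
      omega
    · have hcard : (Atwo 1).card = 1 := by decide
      simp only [Fin.mk_one] at *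
      rw [hcard, Finset.card_le_one]
      intro a ha b hb
      have hA : ∀ v ∈ B, (v.r.val = 0 ∧ v.c.val = 1) ∨ (v.r.val = 1 ∧ v.c.val = 0) := by
        intro v hv
        have h0 := hav v hv 0 (by decide)
        simp only [Atwo, Matrix.cons_val_zero, Finset.mem_insert, Finset.mem_singleton,
          not_or] at h0
        rw [cell_eq_iff, cell_eq_iff] at h0
        have hr := v.r.isLt
        have hc := v.c.isLt
        have h00 : (c00.r.val = 0 ∧ c00.c.val = 0) := by decide
        have h11 : (c11.r.val = 1 ∧ c11.c.val = 1) := by decide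
        omega
      have haa := hA a ha
      have hbb := hA b hb
      by_contra hne
      rcases haa with ⟨h1, h2⟩ | ⟨h1, h2⟩ <;> rcases hbb with ⟨h3, h4⟩ | ⟨h3, h4⟩
      · exact hne ((cell_eq_iff a b).2 (by omega))
      · exact hB (Finset.mem_coe.2 ha) (Finset.mem_coe.2 hb) hne (Or.inr (by omega))
      · exact hB (Finset.mem_coe.2 hb) (Finset.mem_coe.2 ha) (fun h => hne h.symm)
          (Or.inr (by omega))
      · exact hne ((cell_eq_iff a b).2 (by omega))
  · rw [alpha_eq]
    have : (Finset.univ.biUnion Atwo).card = 3 := by decide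
    omega
  · rw [alpha_eq]
    exact card_cell.symm

end TwoCase

end GreedyQ

/-- For every `k ≥ 2` there is a finite poset on which some greedy antichain sequence of
length `k` covers at most `3/4` of `α_k`; moreover in the construction `α_k = |V|`. -/
theorem greedy_antichains_cover_three_quarters (k : ℕ) (hk : 2 ≤ k) :
    ∃ (V : Type) (f : Fintype V) (d : DecidableEq V) (p : PartialOrder V),
      @GreedyAntichainsMissQuarter V f d p k := by
  rcases eq_or_lt_of_le hk with h2 | h3
  · subst h2
    exact ⟨GreedyQ.Cell 2 2, inferInstance, inferInstance, inferInstance, GreedyQ.main_two⟩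
  · haveI : NeZero k := ⟨by omega⟩
    exact ⟨GreedyQ.Cell k (k+1), inferInstance, inferInstance, inferInstance,
      GreedyQ.main_ge3 k (by omega)⟩
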